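/- arXiv:2210.11747 — 2 statements merged into one kernel-verified Lean document; each statement's English description precedes it below -/
import Mathlib

section
/- Let P, P̃, σ₁², σ₂², |h|², |h̃|², α, L be positive real numbers with L < |h̃|²·S̃NR, where SNR = P/σ₁² and S̃NR = P̃/σ₂². Let ε, N₂, N₁ be mutually independent square-integrable real random variables with mean 0, Var(ε) = α, Var(N₂) = σ₂²/(2·|h̃|²), Var(N₁) = σ₁²/(2·|h|²). Set λ = √(L·P/P̃), γ = √((P̃/(2L) − σ₂²/(2|h̃|²))/α), Y = λ·γ·ε + λ·N₂ + N₁, and β = E[Y·ε]/E[Y²]. Then β = (√(2α)/σ₁) · √(SNR·(1 − L/(|h̃|²·S̃NR))) / (SNR + |h|^{−2}). -/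
open MeasureTheory ProbabilityTheory

lemma my_integrable_mul {Ω : Type*} [MeasurableSpace Ω] {μ : Measure Ω}
    {f g : Ω → ℝ} (hf : MemLp f 2 μ) (hg : MemLp g 2 μ) :
    Integrable (fun ω => f ω * g ω) μ := by
  have h : MemLp (f • g) 1 μ := MemLp.smul hg hf
  exact memLp_one_iff_integrable.mp h

lemma my_cross {Ω : Type*} [MeasurableSpace Ω] {μ : Measure Ω} [IsProbabilityMeasure μ]
    {f g : Ω → ℝ} (hf : MemLp f 2 μ) (hg : MemLp g 2 μ)
    (hind : IndepFun f g μ) (hfm : ∫ ω, f ω ∂μ = 0) :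
    ∫ ω, f ω * g ω ∂μ = 0 := by
  have := hind.integral_mul_eq_mul_integral hf.aestronglyMeasurable hg.aestronglyMeasurable
  have h2 : integral μ (f * g) = ∫ ω, f ω * g ω ∂μ := by rfl
  rw [← h2, this, hfm, zero_mul]

set_option maxHeartbeats 1000000 in
/-- Closed form for the MMSE estimation coefficient `β` in the Schalkwijk–Kailath-type
iteration: with `SNR = P/σ₁²`, `S̃NR = P̃/σ₂²`,
`β = (√(2α)/σ₁)·√(SNR(1 − L/(|h̃|²·S̃NR)))/(SNR + |h|⁻²)`.
Here `s1 = σ₁²`, `s2 = σ₂²`, `hsq = |h|²`, `htsq = |h̃|²`. -/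
theorem stmt_7 (P Pt s1 s2 hsq htsq α L : ℝ)
    (hP : 0 < P) (hPt : 0 < Pt) (hs1 : 0 < s1) (hs2 : 0 < s2)
    (hhsq : 0 < hsq) (hhtsq : 0 < htsq) (hα : 0 < α) (hL : 0 < L)
    (hLlt : L < htsq * (Pt / s2))
    {Ω : Type*} [MeasurableSpace Ω] (μ : Measure Ω) [IsProbabilityMeasure μ]
    (ε N2 N1 : Ω → ℝ)
    (hindep : iIndepFun (m := fun _ : Fin 3 => (inferInstance : MeasurableSpace ℝ))
      ![ε, N2, N1] μ)
    (hε2 : MemLp ε 2 μ) (hN22 : MemLp N2 2 μ) (hN12 : MemLp N1 2 μ)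
    (hεmean : ∫ ω, ε ω ∂μ = 0) (hN2mean : ∫ ω, N2 ω ∂μ = 0)
    (hN1mean : ∫ ω, N1 ω ∂μ = 0)
    (hεvar : variance ε μ = α)
    (hN2var : variance N2 μ = s2 / (2 * htsq))
    (hN1var : variance N1 μ = s1 / (2 * hsq)) :
    (∫ ω, (Real.sqrt (L * P / Pt) * Real.sqrt ((Pt / (2 * L) - s2 / (2 * htsq)) / α) * ε ω
          + Real.sqrt (L * P / Pt) * N2 ω + N1 ω) * ε ω ∂μ) /
      (∫ ω, (Real.sqrt (L * P / Pt) * Real.sqrt ((Pt / (2 * L) - s2 / (2 * htsq)) / α) * ε ω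
          + Real.sqrt (L * P / Pt) * N2 ω + N1 ω) ^ 2 ∂μ)
    = (Real.sqrt (2 * α) / Real.sqrt s1) *
        Real.sqrt ((P / s1) * (1 - L / (htsq * (Pt / s2)))) / (P / s1 + hsq⁻¹) := by
  -- pairwise independence
  have hIεN2 : IndepFun ε N2 μ := by
    have := hindep.indepFun (i := 0) (j := 1) (by decide)
    simpa using this
  have hIεN1 : IndepFun ε N1 μ := by
    have := hindep.indepFun (i := 0) (j := 2) (by decide)
    simpa using this
  have hIN2N1 : IndepFun N2 N1 μ := by
    have := hindep.indepFun (i := 1) (j := 2) (by decide)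
    simpa using this
  -- second moments
  have hEεε : ∫ ω, ε ω * ε ω ∂μ = α := by
    have h := variance_eq_sub hε2
    rw [hεvar, hεmean] at h
    have : ∫ ω, ε ω * ε ω ∂μ = ∫ ω, ε ω ^ 2 ∂μ := by
      congr 1; ext ω; ring
    simp only [Pi.pow_apply] at h
    linarith [h]
  have hEN2N2 : ∫ ω, N2 ω * N2 ω ∂μ = s2 / (2 * htsq) := by
    have h := variance_eq_sub hN22
    rw [hN2var, hN2mean] at h
    have : ∫ ω, N2 ω * N2 ω ∂μ = ∫ ω, N2 ω ^ 2 ∂μ := by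
      congr 1; ext ω; ring
    simp only [Pi.pow_apply] at h
    linarith [h]
  have hEN1N1 : ∫ ω, N1 ω * N1 ω ∂μ = s1 / (2 * hsq) := by
    have h := variance_eq_sub hN12
    rw [hN1var, hN1mean] at h
    have : ∫ ω, N1 ω * N1 ω ∂μ = ∫ ω, N1 ω ^ 2 ∂μ := by
      congr 1; ext ω; ring
    simp only [Pi.pow_apply] at h
    linarith [h]
  -- cross moments vanish
  have hEεN2 : ∫ ω, ε ω * N2 ω ∂μ = 0 := my_cross hε2 hN22 hIεN2 hεmean
  have hEεN1 : ∫ ω, ε ω * N1 ω ∂μ = 0 := my_cross hε2 hN12 hIεN1 hεmean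
  have hEN2N1 : ∫ ω, N2 ω * N1 ω ∂μ = 0 := my_cross hN22 hN12 hIN2N1 hN2mean
  set c1 : ℝ := Real.sqrt (L * P / Pt) * Real.sqrt ((Pt / (2 * L) - s2 / (2 * htsq)) / α)
    with hc1def
  set c2 : ℝ := Real.sqrt (L * P / Pt) with hc2def
  -- integrability of all products
  have Iεε := my_integrable_mul hε2 hε2
  have IN2N2 := my_integrable_mul hN22 hN22
  have IN1N1 := my_integrable_mul hN12 hN12
  have IεN2 := my_integrable_mul hε2 hN22
  have IεN1 := my_integrable_mul hε2 hN12
  have IN2N1 := my_integrable_mul hN22 hN12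
  -- numerator
  have A1 : Integrable (fun ω => c2 * (ε ω * N2 ω) + ε ω * N1 ω) μ :=
    (IεN2.const_mul c2).add IεN1
  have hnum : (∫ ω, (c1 * ε ω + c2 * N2 ω + N1 ω) * ε ω ∂μ) = c1 * α := by
    have heq : (fun ω => (c1 * ε ω + c2 * N2 ω + N1 ω) * ε ω)
        = fun ω => c1 * (ε ω * ε ω) + (c2 * (ε ω * N2 ω) + ε ω * N1 ω) := by
      ext ω; ring
    rw [heq, integral_add (Iεε.const_mul c1) A1,
      integral_add (IεN2.const_mul c2) IεN1, integral_const_mul, integral_const_mul,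
      hEεε, hEεN2, hEεN1]
    ring
  -- denominator
  have hden : (∫ ω, (c1 * ε ω + c2 * N2 ω + N1 ω) ^ 2 ∂μ)
      = c1 ^ 2 * α + c2 ^ 2 * (s2 / (2 * htsq)) + s1 / (2 * hsq) := by
    have heq : (fun ω => (c1 * ε ω + c2 * N2 ω + N1 ω) ^ 2)
        = fun ω => (c1 ^ 2 * (ε ω * ε ω) + (c2 ^ 2 * (N2 ω * N2 ω) + N1 ω * N1 ω))
          + ((2 * (c1 * c2)) * (ε ω * N2 ω) + ((2 * c1) * (ε ω * N1 ω)
            + (2 * c2) * (N2 ω * N1 ω))) := by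
      ext ω; ring
    have B1 : Integrable (fun ω => c2 ^ 2 * (N2 ω * N2 ω) + N1 ω * N1 ω) μ :=
      (IN2N2.const_mul _).add IN1N1
    have B2 : Integrable (fun ω => c1 ^ 2 * (ε ω * ε ω)
        + (c2 ^ 2 * (N2 ω * N2 ω) + N1 ω * N1 ω)) μ := (Iεε.const_mul _).add B1
    have B3 : Integrable (fun ω => (2 * c1) * (ε ω * N1 ω)
        + (2 * c2) * (N2 ω * N1 ω)) μ := (IεN1.const_mul _).add (IN2N1.const_mul _)
    have B4 : Integrable (fun ω => (2 * (c1 * c2)) * (ε ω * N2 ω)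
        + ((2 * c1) * (ε ω * N1 ω) + (2 * c2) * (N2 ω * N1 ω))) μ :=
      (IεN2.const_mul _).add B3
    rw [heq, integral_add B2 B4,
      integral_add (Iεε.const_mul _) B1,
      integral_add (IN2N2.const_mul _) IN1N1,
      integral_add (IεN2.const_mul _) B3,
      integral_add (IεN1.const_mul _) (IN2N1.const_mul _),
      integral_const_mul, integral_const_mul, integral_const_mul, integral_const_mul,
      integral_const_mul, hEεε, hEN2N2, hEN1N1, hEεN2, hEεN1, hEN2N1]
    ring
  rw [hnum, hden]
  -- now pure algebra
  have hLs2 : L * s2 < htsq * Pt := by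
    have h' := mul_lt_mul_of_pos_right hLlt hs2
    rwa [mul_assoc, div_mul_cancel₀ _ hs2.ne'] at h'
  have hDpos : 0 < Pt / (2 * L) - s2 / (2 * htsq) := by
    rw [sub_pos, div_lt_div_iff₀ (by positivity) (by positivity)]
    nlinarith
  have htlt : L / (htsq * (Pt / s2)) < 1 := by
    rw [div_lt_one (by positivity)]; exact hLlt
  have hc2sq : c2 ^ 2 = L * P / Pt := Real.sq_sqrt (by positivity)
  have hc1sq : c1 ^ 2 = (L * P / Pt) * ((Pt / (2 * L) - s2 / (2 * htsq)) / α) := by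
    rw [hc1def, mul_pow, Real.sq_sqrt (by positivity), Real.sq_sqrt (by positivity)]
  have hdenval : c1 ^ 2 * α + c2 ^ 2 * (s2 / (2 * htsq)) + s1 / (2 * hsq)
      = P / 2 + s1 / (2 * hsq) := by
    rw [hc1sq, hc2sq]; field_simp; ring
  rw [hdenval]
  have hc1nn : 0 ≤ c1 := by positivity
  have hLHSnn : 0 ≤ c1 * α / (P / 2 + s1 / (2 * hsq)) := by positivity
  have hRHSnn : 0 ≤ (Real.sqrt (2 * α) / Real.sqrt s1) *
      Real.sqrt ((P / s1) * (1 - L / (htsq * (Pt / s2)))) / (P / s1 + hsq⁻¹) := by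
    positivity
  have hX : (0:ℝ) ≤ (P / s1) * (1 - L / (htsq * (Pt / s2))) := by
    nlinarith [htlt, div_pos hP hs1]
  rw [← Real.sqrt_sq hLHSnn, ← Real.sqrt_sq hRHSnn]
  congr 1
  simp only [mul_pow, div_pow]
  rw [hc1sq, Real.sq_sqrt (by positivity : (0:ℝ) ≤ 2 * α), Real.sq_sqrt hs1.le,
    Real.sq_sqrt hX]
  have h1 : P / 2 + s1 / (2 * hsq) ≠ 0 := by positivity
  have h2 : P / s1 + hsq⁻¹ ≠ 0 := by positivity
  field_simp
end

section
/- Let P, P̃, σ₁², σ₂², |h|², |h̃|², α, L be positive real numbers with L < |h̃|²·S̃NR, where SNR = P/σ₁² and S̃NR = P̃/σ₂². Let ε, N₂, N₁ be mutually independent square-integrable real random variables with mean 0, Var(ε) = α, Var(N₂) = σ₂²/(2·|h̃|²), Var(N₁) = σ₁²/(2·|h|²). Set λ = √(L·P/P̃), γ = √((P̃/(2L) − σ₂²/(2|h̃|²))/α), Y = λ·γ·ε + λ·N₂ + N₁, and β = E[Y·ε]/E[Y²]. Then E[(ε − β·Y)²] = α · (1 + SNR·|h|²/(Ψ₁·Ψ₂))^{−1},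 where Ψ₁ = 1 + L·|h|²·SNR/(|h̃|²·S̃NR) and Ψ₂ = (1 − L/(|h̃|²·S̃NR))^{−1}. -/
open MeasureTheory ProbabilityTheory

theorem alg_key (P Pt s1 s2 hsq htsq α L : ℝ)
    (hP : 0 < P) (hPt : 0 < Pt) (hs1 : 0 < s1) (hs2 : 0 < s2)
    (hhsq : 0 < hsq) (hhtsq : 0 < htsq) (hα : 0 < α) (hL : 0 < L)
    (hLlt : L < htsq * (Pt / s2)) :
    α - (L*P/Pt)*((Pt/(2*L)-s2/(2*htsq))/α)*α^2/(P/2+s1/(2*hsq)) =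
      α * (1 + (P / s1) * hsq /
        ((1 + L * hsq * (P / s1) / (htsq * (Pt / s2))) *
          (1 - L / (htsq * (Pt / s2)))⁻¹))⁻¹ := by
  have h2 : (P/2 + s1/(2*hsq)) ≠ 0 := by positivity
  have h3pos : (0:ℝ) < 1 - L / (htsq * (Pt / s2)) :=
    sub_pos.mpr ((div_lt_one (by positivity)).mpr hLlt)
  have h3 : (1 - L / (htsq * (Pt / s2))) ≠ 0 := h3pos.ne'
  have h5pos : (0:ℝ) < 1 + L * hsq * (P / s1) / (htsq * (Pt / s2)) := by positivity
  have h5 : (1 + L * hsq * (P / s1) / (htsq * (Pt / s2))) ≠ 0 := h5pos.ne'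
  have hZ : (1 + (P / s1) * hsq /
        ((1 + L * hsq * (P / s1) / (htsq * (Pt / s2))) *
          (1 - L / (htsq * (Pt / s2)))⁻¹)) ≠ 0 := by
    have : (0:ℝ) < (1 + L * hsq * (P / s1) / (htsq * (Pt / s2))) *
          (1 - L / (htsq * (Pt / s2)))⁻¹ := by positivity
    positivity
  rw [eq_mul_inv_iff_mul_eq₀ hZ]
  field_simp
  ring

/-- One-step variance contraction of the decoding error in the Schalkwijk–Kailath-type
iteration: `E[(ε − βY)²] = α·(1 + SNR·|h|²/(Ψ₁Ψ₂))⁻¹`, where `SNR = P/σ₁²`,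
`S̃NR = P̃/σ₂²`, `Ψ₁ = 1 + L|h|²SNR/(|h̃|²S̃NR)` and `Ψ₂ = (1 − L/(|h̃|²S̃NR))⁻¹`.
Here `s1 = σ₁²`, `s2 = σ₂²`, `hsq = |h|²`, `htsq = |h̃|²`. -/
theorem stmt_9 (P Pt s1 s2 hsq htsq α L : ℝ)
    (hP : 0 < P) (hPt : 0 < Pt) (hs1 : 0 < s1) (hs2 : 0 < s2)
    (hhsq : 0 < hsq) (hhtsq : 0 < htsq) (hα : 0 < α) (hL : 0 < L)
    (hLlt : L < htsq * (Pt / s2))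
    {Ω : Type*} [MeasurableSpace Ω] (μ : Measure Ω) [IsProbabilityMeasure μ]
    (ε N2 N1 : Ω → ℝ)
    (hindep : iIndepFun (m := fun _ : Fin 3 => (inferInstance : MeasurableSpace ℝ))
      ![ε, N2, N1] μ)
    (hε2 : MemLp ε 2 μ) (hN22 : MemLp N2 2 μ) (hN12 : MemLp N1 2 μ)
    (hεmean : ∫ ω, ε ω ∂μ = 0) (hN2mean : ∫ ω, N2 ω ∂μ = 0)
    (hN1mean : ∫ ω, N1 ω ∂μ = 0)
    (hεvar : variance ε μ = α)
    (hN2var : variance N2 μ = s2 / (2 * htsq))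
    (hN1var : variance N1 μ = s1 / (2 * hsq))
    (Y : Ω → ℝ)
    (hY : Y = fun ω =>
      Real.sqrt (L * P / Pt) * Real.sqrt ((Pt / (2 * L) - s2 / (2 * htsq)) / α) * ε ω
        + Real.sqrt (L * P / Pt) * N2 ω + N1 ω)
    (β : ℝ) (hβ : β = (∫ ω, Y ω * ε ω ∂μ) / (∫ ω, (Y ω) ^ 2 ∂μ)) :
    ∫ ω, (ε ω - β * Y ω) ^ 2 ∂μ =
      α * (1 + (P / s1) * hsq /
        ((1 + L * hsq * (P / s1) / (htsq * (Pt / s2))) *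
          (1 - L / (htsq * (Pt / s2)))⁻¹))⁻¹ := by
  -- basic positivity
  have hk : (0:ℝ) < Pt/(2*L) - s2/(2*htsq) := by
    have h1 : L * s2 < htsq * Pt :=
      (lt_div_iff₀ hs2).mp (by rw [← mul_div_assoc] at hLlt; exact hLlt)
    rw [sub_pos, div_lt_div_iff₀ (by positivity) (by positivity)]
    nlinarith
  set a := Real.sqrt (L * P / Pt) with ha_def
  set g := Real.sqrt ((Pt / (2 * L) - s2 / (2 * htsq)) / α) with hg_def
  have ha2 : a ^ 2 = L * P / Pt := Real.sq_sqrt (by positivity)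
  have hg2 : g ^ 2 = (Pt / (2 * L) - s2 / (2 * htsq)) / α :=
    Real.sq_sqrt (by positivity)
  -- integrability of single variables
  have hiε : Integrable ε μ := hε2.integrable one_le_two
  have hiN2 : Integrable N2 μ := hN22.integrable one_le_two
  have hiN1 : Integrable N1 μ := hN12.integrable one_le_two
  -- pairwise independence
  have i01 : IndepFun ε N2 μ := by
    have h := hindep.indepFun (show (0 : Fin 3) ≠ 1 by decide)
    simpa using h
  have i02 : IndepFun ε N1 μ := by
    have h := hindep.indepFun (show (0 : Fin 3) ≠ 2 by decide)
    simpa using h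
  have i12 : IndepFun N2 N1 μ := by
    have h := hindep.indepFun (show (1 : Fin 3) ≠ 2 by decide)
    simpa using h
  -- second moments
  have Iεε : ∫ ω, ε ω ^ 2 ∂μ = α := by
    have h := variance_eq_sub hε2
    simp only [Pi.pow_apply, hεvar, hεmean] at h
    simpa using h.symm
  have I22 : ∫ ω, N2 ω ^ 2 ∂μ = s2 / (2 * htsq) := by
    have h := variance_eq_sub hN22
    simp only [Pi.pow_apply, hN2var, hN2mean] at h
    simpa using h.symm
  have I11 : ∫ ω, N1 ω ^ 2 ∂μ = s1 / (2 * hsq) := by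
    have h := variance_eq_sub hN12
    simp only [Pi.pow_apply, hN1var, hN1mean] at h
    simpa using h.symm
  -- cross moments are zero
  have Cε2 : ∫ ω, ε ω * N2 ω ∂μ = 0 := by
    have h := i01.integral_fun_mul_eq_mul_integral hε2.aestronglyMeasurable hN22.aestronglyMeasurable
    rw [hεmean, hN2mean] at h
    simpa using h
  have Cε1 : ∫ ω, ε ω * N1 ω ∂μ = 0 := by
    have h := i02.integral_fun_mul_eq_mul_integral hε2.aestronglyMeasurable hN12.aestronglyMeasurable
    rw [hεmean, hN1mean] at h
    simpa using h
  have C21 : ∫ ω, N2 ω * N1 ω ∂μ = 0 := by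
    have h := i12.integral_fun_mul_eq_mul_integral hN22.aestronglyMeasurable hN12.aestronglyMeasurable
    rw [hN2mean, hN1mean] at h
    simpa using h
  -- integrability of products
  have Pεε : Integrable (fun ω => ε ω ^ 2) μ := hε2.integrable_sq
  have P22 : Integrable (fun ω => N2 ω ^ 2) μ := hN22.integrable_sq
  have P11 : Integrable (fun ω => N1 ω ^ 2) μ := hN12.integrable_sq
  have Pε2 : Integrable (fun ω => ε ω * N2 ω) μ := i01.integrable_mul hiε hiN2
  have Pε1 : Integrable (fun ω => ε ω * N1 ω) μ := i02.integrable_mul hiε hiN1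
  have P21 : Integrable (fun ω => N2 ω * N1 ω) μ := i12.integrable_mul hiN2 hiN1
  -- a general quadratic-form integral
  have quad : ∀ p q r p' q' r' : ℝ,
      ∫ ω, (p * ε ω + q * N2 ω + r * N1 ω) * (p' * ε ω + q' * N2 ω + r' * N1 ω) ∂μ
        = p * p' * α + q * q' * (s2 / (2 * htsq)) + r * r' * (s1 / (2 * hsq)) := by
    intro p q r p' q' r'
    have key : (fun ω => (p * ε ω + q * N2 ω + r * N1 ω) * (p' * ε ω + q' * N2 ω + r' * N1 ω))
        = fun ω => (p * p') * (ε ω ^ 2) + ((q * q') * (N2 ω ^ 2) + ((r * r') * (N1 ω ^ 2)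
          + ((p * q' + q * p') * (ε ω * N2 ω) + ((p * r' + r * p') * (ε ω * N1 ω)
            + (q * r' + r * q') * (N2 ω * N1 ω))))) := by
      funext ω; ring
    have S5 : Integrable (fun ω => (p * r' + r * p') * (ε ω * N1 ω)
        + (q * r' + r * q') * (N2 ω * N1 ω)) μ := (Pε1.const_mul _).add (P21.const_mul _)
    have S4 : Integrable (fun ω => (p * q' + q * p') * (ε ω * N2 ω)
        + ((p * r' + r * p') * (ε ω * N1 ω) + (q * r' + r * q') * (N2 ω * N1 ω))) μ :=
      (Pε2.const_mul _).add S5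
    have S3 : Integrable (fun ω => (r * r') * (N1 ω ^ 2)
        + ((p * q' + q * p') * (ε ω * N2 ω) + ((p * r' + r * p') * (ε ω * N1 ω)
          + (q * r' + r * q') * (N2 ω * N1 ω)))) μ := (P11.const_mul _).add S4
    have S2 : Integrable (fun ω => (q * q') * (N2 ω ^ 2) + ((r * r') * (N1 ω ^ 2)
        + ((p * q' + q * p') * (ε ω * N2 ω) + ((p * r' + r * p') * (ε ω * N1 ω)
          + (q * r' + r * q') * (N2 ω * N1 ω))))) μ := (P22.const_mul _).add S3
    rw [key, integral_add (Pεε.const_mul _) S2, integral_add (P22.const_mul _) S3,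
      integral_add (P11.const_mul _) S4, integral_add (Pε2.const_mul _) S5,
      integral_add (Pε1.const_mul _) (P21.const_mul _),
      integral_const_mul, integral_const_mul, integral_const_mul, integral_const_mul,
      integral_const_mul, integral_const_mul, Iεε, I22, I11, Cε2, Cε1, C21]
    ring
  -- key integrals
  have hVeq : (a ^ 2) * (g ^ 2) * α + (a ^ 2) * (s2 / (2 * htsq)) + s1 / (2 * hsq)
      = P / 2 + s1 / (2 * hsq) := by
    rw [ha2, hg2]
    field_simp
    ring
  have hYε : ∫ ω, Y ω * ε ω ∂μ = a * g * α := by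
    have e : (fun ω => Y ω * ε ω)
        = fun ω => (a * g * ε ω + a * N2 ω + 1 * N1 ω) * (1 * ε ω + 0 * N2 ω + 0 * N1 ω) := by
      rw [hY]; funext ω; ring
    rw [e, quad]; ring
  have hY2 : ∫ ω, (Y ω) ^ 2 ∂μ = P / 2 + s1 / (2 * hsq) := by
    have e : (fun ω => (Y ω) ^ 2)
        = fun ω => (a * g * ε ω + a * N2 ω + 1 * N1 ω) * (a * g * ε ω + a * N2 ω + 1 * N1 ω) := by
      rw [hY]; funext ω; ring
    rw [e, quad]
    calc a * g * (a * g) * α + a * a * (s2 / (2 * htsq)) + 1 * 1 * (s1 / (2 * hsq))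
        = (a ^ 2) * (g ^ 2) * α + (a ^ 2) * (s2 / (2 * htsq)) + s1 / (2 * hsq) := by ring
      _ = P / 2 + s1 / (2 * hsq) := hVeq
  have hVpos : (0:ℝ) < P / 2 + s1 / (2 * hsq) := by positivity
  have hβval : β = a * g * α / (P / 2 + s1 / (2 * hsq)) := by rw [hβ, hYε, hY2]
  -- final expansion
  have e : (fun ω => (ε ω - β * Y ω) ^ 2)
      = fun ω => ((1 - β * (a * g)) * ε ω + (-(β * a)) * N2 ω + (-β) * N1 ω)
          * ((1 - β * (a * g)) * ε ω + (-(β * a)) * N2 ω + (-β) * N1 ω) := by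
    rw [hY]; funext ω; ring
  rw [e, quad]
  have e2 : (1 - β * (a * g)) * (1 - β * (a * g)) * α
        + (-(β * a)) * (-(β * a)) * (s2 / (2 * htsq)) + (-β) * (-β) * (s1 / (2 * hsq))
      = α - 2 * β * (a * g) * α
        + β ^ 2 * ((a ^ 2) * (g ^ 2) * α + (a ^ 2) * (s2 / (2 * htsq)) + s1 / (2 * hsq)) := by
    ring
  rw [e2, hVeq, hβval]
  have e3 : α - 2 * (a * g * α / (P / 2 + s1 / (2 * hsq))) * (a * g) * α
        + (a * g * α / (P / 2 + s1 / (2 * hsq))) ^ 2 * (P / 2 + s1 / (2 * hsq))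
      = α - ((a * g) ^ 2) * α ^ 2 / (P / 2 + s1 / (2 * hsq)) := by
    field_simp
    ring
  rw [e3, show (a * g) ^ 2 = a ^ 2 * g ^ 2 by ring, ha2, hg2]
  exact alg_key P Pt s1 s2 hsq htsq α L hP hPt hs1 hs2 hhsq hhtsq hα hL hLlt
end
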